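/- For every real k > 0 and every r > 0, the Bessel functions of the first kind satisfy the strict Turán-type inequality J_k(r)^2 − J_{k−1}(r)·J_{k+1}(r) > J_k(r)^2/(k+1). -/

import Mathlib

set_option maxHeartbeats 1000000

/-- Bessel function of the first kind of real order `k`, defined by its power series
(valid for `r > 0`, using real powers). -/
noncomputable def besselJ (k r : ℝ) : ℝ :=
  ∑' m : ℕ, ((-1 : ℝ) ^ m / (m.factorial * Real.Gamma (m + k + 1))) * (r / 2) ^ ((2 * m : ℝ) + k)

open Real Filter Topology

namespace BesselTuran

/-- `n`-th coefficient term of the normalized Bessel series. -/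
noncomputable def bt (a t : ℝ) (n : ℕ) : ℝ :=
  (-1 : ℝ) ^ n * t ^ n / (n.factorial * Real.Gamma (n + a + 1))

/-- The normalized Bessel-type entire function `F a t = ∑ (-1)^n t^n / (n! Γ(n+a+1))`. -/
noncomputable def F (a t : ℝ) : ℝ := ∑' n : ℕ, bt a t n

lemma arg_pos {a : ℝ} (ha : 0 < a + 1) (n : ℕ) : 0 < (n : ℝ) + a + 1 := by
  have : (0:ℝ) ≤ (n:ℝ) := Nat.cast_nonneg n
  linarith

lemma gamma_pos {a : ℝ} (ha : 0 < a + 1) (n : ℕ) : 0 < Real.Gamma ((n : ℝ) + a + 1) :=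
  Real.Gamma_pos_of_pos (arg_pos ha n)

lemma gamma_lb {a : ℝ} (ha : 0 < a + 1) (n : ℕ) :
    Real.Gamma (a + 1) * (min (a + 1) 1) ^ n ≤ Real.Gamma ((n : ℝ) + a + 1) := by
  induction n with
  | zero => simp
  | succ n ih =>
    have h1 : ((n + 1 : ℕ) : ℝ) + a + 1 = ((n : ℝ) + a + 1) + 1 := by push_cast; ring
    rw [h1, Real.Gamma_add_one (ne_of_gt (arg_pos ha n))]
    have hm : (0:ℝ) < min (a + 1) 1 := lt_min ha one_pos
    have hg : (0:ℝ) < Real.Gamma (a + 1) := Real.Gamma_pos_of_pos ha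
    have hle : min (a + 1) 1 ≤ (n : ℝ) + a + 1 := by
      have : min (a+1) 1 ≤ a + 1 := min_le_left _ _
      have : (0:ℝ) ≤ (n:ℝ) := Nat.cast_nonneg n
      have := min_le_left (a+1) 1
      linarith
    calc Real.Gamma (a + 1) * min (a + 1) 1 ^ (n + 1)
        = min (a + 1) 1 * (Real.Gamma (a + 1) * min (a + 1) 1 ^ n) := by ring
      _ ≤ ((n : ℝ) + a + 1) * Real.Gamma ((n : ℝ) + a + 1) := by
          apply mul_le_mul hle ih (by positivity) (le_of_lt (arg_pos ha n))

lemma bt_abs {a : ℝ} (ha : 0 < a + 1) (t : ℝ) (n : ℕ) :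
    |bt a t n| = |t| ^ n / (n.factorial * Real.Gamma ((n : ℝ) + a + 1)) := by
  unfold bt
  rw [abs_div, abs_mul, abs_pow, abs_pow, abs_neg, abs_one, one_pow, one_mul,
    abs_of_pos (mul_pos (by positivity) (gamma_pos ha n))]

lemma bt_abs_le {a : ℝ} (ha : 0 < a + 1) (t : ℝ) (n : ℕ) :
    |bt a t n| ≤ ((|t| / min (a + 1) 1) ^ n / n.factorial) * (1 / Real.Gamma (a + 1)) := by
  rw [bt_abs ha t n]
  have hm : (0:ℝ) < min (a + 1) 1 := lt_min ha one_pos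
  have hg : (0:ℝ) < Real.Gamma (a + 1) := Real.Gamma_pos_of_pos ha
  have hm' : min (a + 1) 1 ≠ 0 := ne_of_gt hm
  have hg' : Real.Gamma (a + 1) ≠ 0 := ne_of_gt hg
  have h2 : ((|t| / min (a + 1) 1) ^ n / n.factorial) * (1 / Real.Gamma (a + 1))
      = |t| ^ n / (n.factorial * (Real.Gamma (a + 1) * (min (a + 1) 1) ^ n)) := by
    rw [div_pow]
    ring
  rw [h2]
  apply div_le_div_of_nonneg_left (by positivity) (mul_pos (by positivity) (mul_pos hg (pow_pos hm n)))
  have := gamma_lb ha n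
  have hf : (0:ℝ) < n.factorial := by positivity
  calc (n.factorial : ℝ) * (Real.Gamma (a+1) * min (a+1) 1 ^ n)
      ≤ (n.factorial : ℝ) * Real.Gamma ((n:ℝ) + a + 1) := by
        apply mul_le_mul_of_nonneg_left (gamma_lb ha n) hf.le

lemma summable_abs_bt {a : ℝ} (ha : 0 < a + 1) (t : ℝ) :
    Summable fun n => |bt a t n| := by
  apply Summable.of_nonneg_of_le (fun n => abs_nonneg _) (bt_abs_le ha t)
  exact (Real.summable_pow_div_factorial _).mul_right _

lemma summable_bt {a : ℝ} (ha : 0 < a + 1) (t : ℝ) : Summable (bt a t) :=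
  (summable_abs_bt ha t).of_abs

lemma bt_zero {a : ℝ} (ha : 0 < a) (t : ℝ) :
    bt (a - 1) t 0 = a * bt a t 0 := by
  unfold bt
  have h0 : ((0:ℕ):ℝ) = 0 := by norm_num
  have : Real.Gamma (0 + a + 1) = a * Real.Gamma (0 + (a-1) + 1) := by
    rw [show (0:ℝ) + a + 1 = (0 + (a-1) + 1) + 1 by ring]
    rw [Real.Gamma_add_one (by rw [show (0:ℝ) + (a-1) + 1 = a by ring]; exact ha.ne')]
    rw [show (0:ℝ) + (a-1) + 1 = a by ring]
  rw [h0, this]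
  have hΓ : Real.Gamma (0 + (a-1) + 1) ≠ 0 := by
    rw [show (0:ℝ) + (a-1) + 1 = a by ring]
    exact (Real.Gamma_pos_of_pos ha).ne'
  field_simp

lemma bt_rec {a : ℝ} (ha : 0 < a) (t : ℝ) (n : ℕ) :
    bt (a - 1) t (n + 1) = a * bt a t (n + 1) - t * bt (a + 1) t n := by
  unfold bt
  have hpos : (0:ℝ) < (n:ℝ) + a + 1 := arg_pos (by linarith) n
  have hΓpos : 0 < Real.Gamma ((n:ℝ) + a + 1) := Real.Gamma_pos_of_pos hpos
  have e1 : ((n+1:ℕ):ℝ) + (a - 1) + 1 = (n:ℝ) + a + 1 := by push_cast; ring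
  have e2 : ((n+1:ℕ):ℝ) + a + 1 = ((n:ℝ) + a + 1) + 1 := by push_cast; ring
  have e3 : (n:ℝ) + (a + 1) + 1 = ((n:ℝ) + a + 1) + 1 := by ring
  rw [e1, e2, e3, Real.Gamma_add_one hpos.ne']
  have hfac : ((n+1).factorial : ℝ) = (n + 1) * n.factorial := by
    rw [Nat.factorial_succ]; push_cast; ring
  rw [hfac]
  have hf : ((n.factorial:ℝ)) ≠ 0 := by positivity
  have hn1 : ((n:ℝ) + 1) ≠ 0 := by positivity
  field_simp
  ring

lemma F_rec {a : ℝ} (ha : 0 < a) (t : ℝ) :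
    F (a - 1) t = a * F a t - t * F (a + 1) t := by
  have ha1 : (0:ℝ) < (a - 1) + 1 := by linarith
  have ha2 : (0:ℝ) < a + 1 := by linarith
  have ha3 : (0:ℝ) < (a + 1) + 1 := by linarith
  have s1 : Summable (bt (a - 1) t) := summable_bt ha1 t
  have s2 : Summable (bt a t) := summable_bt ha2 t
  have s3 : Summable (bt (a + 1) t) := summable_bt ha3 t
  have s2' : Summable (fun n => a * bt a t (n + 1)) :=
    (((summable_nat_add_iff 1).mpr s2).mul_left a)
  have s3' : Summable (fun n => t * bt (a + 1) t n) := s3.mul_left t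
  calc F (a - 1) t = bt (a-1) t 0 + ∑' n, bt (a-1) t (n+1) := Summable.tsum_eq_zero_add s1
    _ = a * bt a t 0 + ∑' n, (a * bt a t (n+1) - t * bt (a+1) t n) := by
        rw [bt_zero ha t]
        congr 1
        exact tsum_congr fun n => bt_rec ha t n
    _ = a * bt a t 0 + ((∑' n, a * bt a t (n+1)) - ∑' n, t * bt (a+1) t n) := by
        rw [Summable.tsum_sub s2' s3']
    _ = a * (bt a t 0 + ∑' n, bt a t (n+1)) - t * ∑' n, bt (a+1) t n := by
        rw [tsum_mul_left, tsum_mul_left]; ring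
    _ = a * F a t - t * F (a + 1) t := by
        rw [← Summable.tsum_eq_zero_add s2]; rfl
/-- The normalized Turán expression. -/
noncomputable def D (a t : ℝ) : ℝ :=
  a / (a + 1) * (F a t) ^ 2 - F (a - 1) t * F (a + 1) t

lemma D_rec {a : ℝ} (ha : 0 < a) (t : ℝ) :
    D a t = 2 / (a + 2) * t * (F (a + 1) t) ^ 2 + a / (a + 1) * t * D (a + 1) t := by
  have h1 : F (a - 1) t = a * F a t - t * F (a + 1) t := F_rec ha t
  have h2 : F a t = (a + 1) * F (a + 1) t - t * F (a + 2) t := by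
    have h := F_rec (show (0:ℝ) < a + 1 by linarith) t
    rw [show a + 1 - 1 = a by ring, show a + 1 + 1 = a + 2 by ring] at h
    linarith [h]
  unfold D
  rw [show a + 1 - 1 = a by ring, h1, h2]
  have hne1 : a + 1 ≠ 0 := by positivity
  have hne2 : a + 2 ≠ 0 := by positivity
  field_simp
  ring_nf

lemma iterate_D {k : ℝ} (hk : 0 < k) (t : ℝ) (M : ℕ) :
    D k t = (∑ m ∈ Finset.range M,
        2 * k / ((k + m) * (k + m + 2)) * t ^ (m + 1) * (F (k + m + 1) t) ^ 2)
      + k / (k + M) * t ^ M * D (k + M) t := by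
  induction M with
  | zero => simp [hk.ne']
  | succ M ih =>
    have hkM : (0:ℝ) < k + M := by positivity
    have hrec := D_rec hkM t
    rw [ih, Finset.sum_range_succ, hrec]
    have e1 : (((M+1):ℕ):ℝ) = (M:ℝ) + 1 := by push_cast; ring
    rw [e1]
    have e2 : k + ((M:ℝ) + 1) = k + M + 1 := by ring
    rw [e2]
    have hne1 : k + (M:ℝ) ≠ 0 := hkM.ne'
    have hne2 : k + (M:ℝ) + 1 ≠ 0 := by positivity
    have hne3 : k + (M:ℝ) + 2 ≠ 0 := by positivity
    field_simp
    ring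
lemma gamma_lb' {a : ℝ} (ha : 0 ≤ a) (n : ℕ) :
    Real.Gamma (a + 1) ≤ Real.Gamma ((n : ℝ) + a + 1) := by
  have h := gamma_lb (show (0:ℝ) < a + 1 by linarith) n
  rwa [min_eq_right (by linarith : (1:ℝ) ≤ a + 1), one_pow, mul_one] at h

lemma F_abs_le {a : ℝ} (ha : 0 ≤ a) {t : ℝ} (ht : 0 ≤ t) :
    |F a t| ≤ (∑' n : ℕ, t ^ n / n.factorial) / Real.Gamma (a + 1) := by
  have ha1 : (0:ℝ) < a + 1 := by linarith
  have hg : (0:ℝ) < Real.Gamma (a + 1) := Real.Gamma_pos_of_pos ha1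
  have h1 : |F a t| ≤ ∑' n, |bt a t n| := by
    have := norm_tsum_le_tsum_norm (f := bt a t) (by simpa [Real.norm_eq_abs] using summable_abs_bt ha1 t)
    simpa [Real.norm_eq_abs, F] using this
  refine h1.trans ?_
  have h2 : ∀ n : ℕ, |bt a t n| ≤ (t ^ n / n.factorial) / Real.Gamma (a + 1) := by
    intro n
    rw [bt_abs ha1 t n, abs_of_nonneg ht]
    rw [div_div]
    exact div_le_div_of_nonneg_left (by positivity)
      (mul_pos (by positivity) hg)
      (mul_le_mul_of_nonneg_left (gamma_lb' ha n) (by positivity))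
  calc (∑' n, |bt a t n|) ≤ ∑' n : ℕ, (t ^ n / n.factorial) / Real.Gamma (a + 1) := by
        apply Summable.tsum_le_tsum h2 (summable_abs_bt ha1 t)
          ((Real.summable_pow_div_factorial t).div_const _)
    _ = (∑' n : ℕ, t ^ n / n.factorial) / Real.Gamma (a + 1) := by
        rw [tsum_div_const]

lemma F_pos {a : ℝ} (ha : 0 ≤ a) {t : ℝ} (ht : 0 ≤ t)
    (h : t * (∑' n : ℕ, t ^ n / n.factorial) < a + 1) : 0 < F a t := by
  have ha1 : (0:ℝ) < a + 1 := by linarith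
  have ha2 : (0:ℝ) < a + 2 := by linarith
  have hg1 : (0:ℝ) < Real.Gamma (a + 1) := Real.Gamma_pos_of_pos ha1
  have hg2 : (0:ℝ) < Real.Gamma (a + 2) := Real.Gamma_pos_of_pos ha2
  have hs : Summable (bt a t) := summable_bt ha1 t
  have hsplit : F a t = bt a t 0 + ∑' n, bt a t (n + 1) := Summable.tsum_eq_zero_add hs
  have h0 : bt a t 0 = 1 / Real.Gamma (a + 1) := by
    unfold bt
    norm_num
  -- bound the tail
  have htail : |∑' n, bt a t (n + 1)| ≤ t * (∑' n : ℕ, t ^ n / n.factorial) / Real.Gamma (a + 2) := by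
    have hs' : Summable (fun n => |bt a t (n + 1)|) :=
      (summable_nat_add_iff 1).mpr (summable_abs_bt ha1 t)
    have h1 : |∑' n, bt a t (n + 1)| ≤ ∑' n, |bt a t (n + 1)| := by
      have := norm_tsum_le_tsum_norm (f := fun n => bt a t (n + 1))
        (by simpa [Real.norm_eq_abs] using hs')
      simpa [Real.norm_eq_abs] using this
    refine h1.trans ?_
    have h2 : ∀ n : ℕ, |bt a t (n + 1)| ≤ t * (t ^ n / n.factorial) / Real.Gamma (a + 2) := by
      intro n
      rw [bt_abs ha1 t (n + 1), abs_of_nonneg ht]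
      have hΓ : Real.Gamma (a + 2) ≤ Real.Gamma (((n+1):ℕ) + a + 1) := by
        have := gamma_lb' (show (0:ℝ) ≤ a + 1 by linarith) n
        rw [show (a:ℝ) + 1 + 1 = a + 2 by ring] at this
        rw [show (((n+1):ℕ):ℝ) + a + 1 = (n:ℝ) + (a+1) + 1 by push_cast; ring]
        exact this
      have hfac : (n.factorial : ℝ) ≤ ((n+1).factorial : ℝ) := by
        exact_mod_cast Nat.factorial_le (Nat.le_succ n)
      have key : (n.factorial : ℝ) * Real.Gamma (a + 2)
          ≤ ((n+1).factorial : ℝ) * Real.Gamma (((n+1):ℕ) + a + 1) := by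
        apply mul_le_mul hfac hΓ hg2.le (by positivity)
      calc t ^ (n+1) / (((n+1).factorial : ℝ) * Real.Gamma (((n+1):ℕ) + a + 1))
          ≤ t ^ (n+1) / ((n.factorial : ℝ) * Real.Gamma (a + 2)) := by
            apply div_le_div_of_nonneg_left (by positivity)
              (mul_pos (by positivity) hg2) key
        _ = t * (t ^ n / n.factorial) / Real.Gamma (a + 2) := by
            rw [pow_succ]
            field_simp
    calc (∑' n, |bt a t (n + 1)|)
        ≤ ∑' n : ℕ, t * (t ^ n / n.factorial) / Real.Gamma (a + 2) := by
          apply Summable.tsum_le_tsum h2 hs'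
            (((Real.summable_pow_div_factorial t).mul_left t).div_const _)
      _ = t * (∑' n : ℕ, t ^ n / n.factorial) / Real.Gamma (a + 2) := by
          rw [← tsum_mul_left, ← tsum_div_const]
  have hΓrec : Real.Gamma (a + 2) = (a + 1) * Real.Gamma (a + 1) := by
    rw [show a + 2 = (a + 1) + 1 by ring, Real.Gamma_add_one ha1.ne']
  have hlb : 1 / Real.Gamma (a + 1) = (a + 1) / Real.Gamma (a + 2) := by
    rw [hΓrec]; field_simp
  have : F a t ≥ (a + 1) / Real.Gamma (a + 2) - t * (∑' n : ℕ, t ^ n / n.factorial) / Real.Gamma (a + 2) := by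
    rw [hsplit, h0, hlb]
    have := abs_le.mp htail
    linarith [this.1]
  have hpos : (0:ℝ) < (a + 1) / Real.Gamma (a + 2) - t * (∑' n : ℕ, t ^ n / n.factorial) / Real.Gamma (a + 2) := by
    rw [div_sub_div_same]
    exact div_pos (by linarith) hg2
  linarith
lemma gamma_factorial_lb {k : ℝ} (hk : 0 < k) (M : ℕ) :
    (M.factorial : ℝ) * Real.Gamma (k + 1) ≤ Real.Gamma (k + M + 1) := by
  induction M with
  | zero => simp
  | succ M ih =>
    have hpos : (0:ℝ) < k + M + 1 := by positivity
    have e1 : k + ((M+1 : ℕ):ℝ) + 1 = (k + M + 1) + 1 := by push_cast; ring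
    rw [e1, Real.Gamma_add_one hpos.ne']
    have hfac : ((M+1).factorial : ℝ) = ((M:ℝ) + 1) * M.factorial := by
      rw [Nat.factorial_succ]; push_cast; ring
    rw [hfac]
    have h1 : ((M:ℝ) + 1) ≤ k + M + 1 := by linarith
    have hΓpos : (0:ℝ) < Real.Gamma (k + 1) := Real.Gamma_pos_of_pos (by linarith)
    calc ((M:ℝ) + 1) * M.factorial * Real.Gamma (k + 1)
        = ((M:ℝ) + 1) * ((M.factorial : ℝ) * Real.Gamma (k + 1)) := by ring
      _ ≤ (k + M + 1) * Real.Gamma (k + M + 1) := by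
          apply mul_le_mul h1 ih (by positivity) (by positivity)

lemma rem_tendsto {k : ℝ} (hk : 0 < k) {t : ℝ} (ht : 0 < t) :
    Tendsto (fun M : ℕ => k / (k + M) * t ^ M * D (k + M) t) atTop (𝓝 0) := by
  set Et := ∑' n : ℕ, t ^ n / n.factorial with hEt
  have hEt0 : 0 < Et := by
    have hsum : Summable (fun n : ℕ => t ^ n / (n.factorial : ℝ)) :=
      Real.summable_pow_div_factorial t
    have h0 : (1:ℝ) = t ^ 0 / (Nat.factorial 0 : ℝ) := by norm_num
    have := Summable.le_tsum hsum 0 (fun i _ => by positivity)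
    rw [← h0] at this
    linarith
  have hΓk : (0:ℝ) < Real.Gamma (k + 1) := Real.Gamma_pos_of_pos (by linarith)
  set C := 2 * Et ^ 2 * t / Real.Gamma (k + 1) ^ 2 with hC
  have hglim : Tendsto (fun M : ℕ => C * (t ^ (M - 1) / ((M - 1).factorial : ℝ)))
      atTop (𝓝 0) := by
    have h1 : Tendsto (fun n : ℕ => t ^ n / (n.factorial : ℝ)) atTop (𝓝 0) :=
      FloorSemiring.tendsto_pow_div_factorial_atTop t
    have h2 := (h1.comp (tendsto_sub_atTop_nat 1)).const_mul C
    simpa using h2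
  apply squeeze_zero_norm' ?_ hglim
  filter_upwards [eventually_ge_atTop 1] with M hM
  have hM1 : (1:ℝ) ≤ (M:ℝ) := by exact_mod_cast hM
  set a := k + (M:ℝ) with ha
  have ha1 : (1:ℝ) ≤ a := by simp [ha]; linarith
  have ha0 : (0:ℝ) < a := by linarith
  have hΓa : (0:ℝ) < Real.Gamma a := Real.Gamma_pos_of_pos ha0
  -- bounds on the three F values
  have hF1 : |F (a - 1) t| ≤ Et / Real.Gamma a := by
    have := F_abs_le (show (0:ℝ) ≤ a - 1 by linarith) ht.le
    rwa [show a - 1 + 1 = a by ring] at this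
  have hΓ2 : Real.Gamma a ≤ Real.Gamma (a + 1) := by
    rw [Real.Gamma_add_one ha0.ne']
    nlinarith
  have hΓ3 : Real.Gamma a ≤ Real.Gamma (a + 1 + 1) := by
    rw [Real.Gamma_add_one (show a + 1 ≠ 0 by positivity)]
    nlinarith [Real.Gamma_pos_of_pos (show (0:ℝ) < a + 1 by linarith)]
  have hF2 : |F a t| ≤ Et / Real.Gamma a := by
    refine (F_abs_le (by linarith) ht.le).trans ?_
    exact div_le_div_of_nonneg_left hEt0.le hΓa hΓ2
  have hF3 : |F (a + 1) t| ≤ Et / Real.Gamma a := by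
    refine (F_abs_le (show (0:ℝ) ≤ a + 1 by linarith) ht.le).trans ?_
    exact div_le_div_of_nonneg_left hEt0.le hΓa hΓ3
  have hEΓ : (0:ℝ) ≤ Et / Real.Gamma a := by positivity
  have hDabs : |D a t| ≤ 2 * (Et / Real.Gamma a) ^ 2 := by
    unfold D
    have hcoef : (0:ℝ) ≤ a / (a + 1) := by positivity
    have hcoef1 : a / (a + 1) ≤ 1 := by
      rw [div_le_one (by linarith)]; linarith
    have e1 : |a / (a + 1) * F a t ^ 2 - F (a - 1) t * F (a + 1) t|
        ≤ |a / (a + 1) * F a t ^ 2| + |F (a - 1) t * F (a + 1) t| := abs_sub _ _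
    refine e1.trans ?_
    rw [abs_mul, abs_mul, abs_pow]
    have b1 : |a / (a+1)| * |F a t| ^ 2 ≤ 1 * (Et / Real.Gamma a) ^ 2 := by
      apply mul_le_mul (by rwa [abs_of_nonneg hcoef]) ?_ (by positivity) zero_le_one
      exact pow_le_pow_left₀ (abs_nonneg _) hF2 2
    have b2 : |F (a-1) t| * |F (a+1) t| ≤ (Et / Real.Gamma a) * (Et / Real.Gamma a) :=
      mul_le_mul hF1 hF3 (abs_nonneg _) hEΓ
    nlinarith
  -- gamma lower bound
  have hΓlb : ((M-1).factorial : ℝ) * Real.Gamma (k + 1) ≤ Real.Gamma a := by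
    have := gamma_factorial_lb hk (M - 1)
    have ecast : k + ((M-1 : ℕ):ℝ) + 1 = a := by
      rw [ha, Nat.cast_sub hM]; push_cast; ring
    rwa [ecast] at this
  have hfac1 : (1:ℝ) ≤ ((M-1).factorial : ℝ) := by exact_mod_cast Nat.one_le_iff_ne_zero.mpr (Nat.factorial_ne_zero _)
  -- assemble
  have hrem : ‖k / (k + M) * t ^ M * D (k + M) t‖
      = k / (k + M) * t ^ M * |D a t| := by
    rw [Real.norm_eq_abs, abs_mul, abs_mul, abs_of_nonneg (by positivity : (0:ℝ) ≤ k / (k + M)),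
      abs_of_nonneg (by positivity : (0:ℝ) ≤ t ^ M)]
  rw [hrem]
  have hfrac : k / (k + (M:ℝ)) ≤ 1 := by
    rw [div_le_one (by positivity)]
    have : (0:ℝ) ≤ (M:ℝ) := by positivity
    linarith
  have step1 : k / (k + (M:ℝ)) * t ^ M * |D a t| ≤ t ^ M * (2 * (Et / Real.Gamma a) ^ 2) := by
    have h1 : k / (k + (M:ℝ)) * t ^ M * |D a t| ≤ 1 * t ^ M * (2 * (Et / Real.Gamma a) ^ 2) := by
      apply mul_le_mul (mul_le_mul hfrac le_rfl (by positivity) zero_le_one) hDabs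
        (abs_nonneg _) (by positivity)
    linarith
  refine step1.trans ?_
  -- t ^ M * (2 * (Et / Γ a)^2) ≤ C * (t ^ (M-1) / (M-1)!)
  have hMsplit : t ^ M = t * t ^ (M - 1) := by
    rw [← pow_succ']
    congr 1
    omega
  have hΓsq : ((M-1).factorial : ℝ) * Real.Gamma (k + 1) ^ 2 ≤ Real.Gamma a ^ 2 := by
    have h1 : ((M-1).factorial : ℝ) ≤ ((M-1).factorial : ℝ)^2 := by nlinarith [hfac1]
    calc ((M-1).factorial : ℝ) * Real.Gamma (k + 1) ^ 2
        ≤ ((M-1).factorial : ℝ)^2 * Real.Gamma (k + 1) ^ 2 :=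
          mul_le_mul_of_nonneg_right h1 (by positivity)
      _ = (((M-1).factorial : ℝ) * Real.Gamma (k + 1)) ^ 2 := by ring
      _ ≤ Real.Gamma a ^ 2 := by
          apply pow_le_pow_left₀ (by positivity) hΓlb
  have key : 2 * (Et / Real.Gamma a) ^ 2 ≤ 2 * Et ^ 2 / (((M-1).factorial : ℝ) * Real.Gamma (k+1) ^ 2) := by
    have e0 : 2 * (Et / Real.Gamma a) ^ 2 = 2 * Et ^ 2 / Real.Gamma a ^ 2 := by
      rw [div_pow]; ring
    rw [e0]
    exact div_le_div_of_nonneg_left (by positivity) (by positivity) hΓsq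
  calc t ^ M * (2 * (Et / Real.Gamma a) ^ 2)
      ≤ t ^ M * (2 * Et ^ 2 / (((M-1).factorial : ℝ) * Real.Gamma (k+1) ^ 2)) := by
        apply mul_le_mul_of_nonneg_left key (by positivity)
    _ = C * (t ^ (M - 1) / ((M - 1).factorial : ℝ)) := by
        rw [hMsplit, hC]
        field_simp
lemma D_pos {k : ℝ} (hk : 0 < k) {t : ℝ} (ht : 0 < t) : 0 < D k t := by
  set Et := ∑' n : ℕ, t ^ n / n.factorial with hEtdef
  obtain ⟨j, hj⟩ := exists_nat_gt (t * Et)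
  set S : ℕ → ℝ := fun M => ∑ m ∈ Finset.range M,
    2 * k / ((k + m) * (k + m + 2)) * t ^ (m + 1) * (F (k + m + 1) t) ^ 2 with hS
  have hterm_nonneg : ∀ m : ℕ,
      0 ≤ 2 * k / ((k + m) * (k + m + 2)) * t ^ (m + 1) * (F (k + m + 1) t) ^ 2 := by
    intro m
    positivity
  have hmono : Monotone S := by
    apply monotone_nat_of_le_succ
    intro n
    rw [hS]
    simp only []
    rw [Finset.sum_range_succ]
    linarith [hterm_nonneg n]
  have hlim : Tendsto S atTop (𝓝 (D k t)) := by
    have hrem := rem_tendsto hk ht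
    have hfun : S = fun M : ℕ => D k t - k / (k + M) * t ^ M * D (k + M) t := by
      funext M
      have := iterate_D hk t M
      rw [hS]
      linarith
    rw [hfun]
    simpa using tendsto_const_nhds.sub hrem
  have hSj : 0 < S (j + 1) := by
    rw [hS]
    simp only []
    rw [Finset.sum_range_succ]
    have hpos : 0 < 2 * k / ((k + j) * (k + j + 2)) * t ^ (j + 1) * (F (k + j + 1) t) ^ 2 := by
      have hF : 0 < F (k + (j:ℝ) + 1) t := by
        apply F_pos (by positivity) ht.le
        have : (j:ℝ) ≤ k + (j:ℝ) + 1 + 1 := by linarith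
        calc t * Et < (j:ℝ) := hj
          _ ≤ k + (j:ℝ) + 1 + 1 := this
      positivity
    have hsum_nonneg : 0 ≤ ∑ m ∈ Finset.range j,
        2 * k / ((k + m) * (k + m + 2)) * t ^ (m + 1) * (F (k + m + 1) t) ^ 2 :=
      Finset.sum_nonneg fun m _ => hterm_nonneg m
    linarith
  have hge : S (j + 1) ≤ D k t := by
    apply ge_of_tendsto hlim
    filter_upwards [eventually_ge_atTop (j + 1)] with M hM
    exact hmono hM
  linarith

lemma besselJ_eq (a : ℝ) {r : ℝ} (hr : 0 < r) :
    besselJ a r = F a ((r / 2) ^ 2) * (r / 2) ^ a := by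
  unfold besselJ F bt
  rw [← tsum_mul_right]
  refine tsum_congr fun m => ?_
  have hq : (0:ℝ) < r / 2 := by linarith
  have h1 : (r / 2) ^ ((2 * m : ℝ) + a) = (r / 2) ^ ((2 * m : ℝ)) * (r / 2) ^ a :=
    Real.rpow_add hq _ _
  have h2 : (r / 2) ^ ((2 * m : ℝ)) = ((r / 2) ^ 2) ^ m := by
    rw [show ((2:ℝ) * m) = ((2 * m : ℕ) : ℝ) by push_cast; ring,
      Real.rpow_natCast, pow_mul]
  rw [h1, h2]
  ring

end BesselTuran

/-- Strict Turán-type inequality for Bessel functions. -/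
theorem besselJ_turan_inequality (k r : ℝ) (hk : 0 < k) (hr : 0 < r) :
    besselJ k r ^ 2 - besselJ (k - 1) r * besselJ (k + 1) r > besselJ k r ^ 2 / (k + 1) := by
  have hq0 : (0:ℝ) < r / 2 := by linarith
  have ht : (0:ℝ) < (r / 2) ^ 2 := by positivity
  set t := (r / 2) ^ 2 with htdef
  have hD : 0 < BesselTuran.D k t := BesselTuran.D_pos hk ht
  rw [BesselTuran.besselJ_eq k hr, BesselTuran.besselJ_eq (k - 1) hr,
    BesselTuran.besselJ_eq (k + 1) hr]
  have hqq : (r / 2) ^ (k - 1) * (r / 2) ^ (k + 1) = (r / 2) ^ k * (r / 2) ^ k := by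
    rw [← Real.rpow_add hq0, ← Real.rpow_add hq0]
    congr 1
    ring
  have hk1 : (k:ℝ) + 1 ≠ 0 := by positivity
  have key : (BesselTuran.F k t * (r/2) ^ k) ^ 2
      - (BesselTuran.F (k-1) t * (r/2) ^ (k-1)) * (BesselTuran.F (k+1) t * (r/2) ^ (k+1))
      - (BesselTuran.F k t * (r/2) ^ k) ^ 2 / (k + 1)
      = ((r/2) ^ k) ^ 2 * ((k + 1 - 1)/(k+1) * (BesselTuran.F k t)^2
          - BesselTuran.F (k-1) t * BesselTuran.F (k+1) t) := by
    field_simp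
    linear_combination (-(k+1) * BesselTuran.F (k-1) t * BesselTuran.F (k+1) t) * hqq
  have hDD : (k + 1 - 1)/(k+1) * (BesselTuran.F k t)^2
      - BesselTuran.F (k-1) t * BesselTuran.F (k+1) t = BesselTuran.D k t := by
    unfold BesselTuran.D
    congr 2
    ring
  rw [hDD] at key
  have hpos : 0 < ((r/2) ^ k) ^ 2 * BesselTuran.D k t := by
    have := Real.rpow_pos_of_pos hq0 k
    positivity
  linarith [key, hpos]
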